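/- If Γ ⊢_Σ M : A holds in LF, then the encoded term ⟨M⟩ is well-typed in the simply typed lambda calculus with type φ(A), in the signature/context obtained by flattening the types of all constants and variables via φ. -/

import Mathlib

/- De Bruijn presentation of LF: kinds, types, objects (with mvar-variables). -/
mutual
inductive LTy : Type where
  | const : Nat → LTy
  | pi : LTy → LTy → LTy
  | app : LTy → LObj → LTy
inductive LObj : Type where
  | const : Nat → LObj
  | var : Nat → LObj
  | mvar : Nat → LObj
  | app : LObj → LObj → LObj
  | lam : LTy → LObj → LObj
end

inductive LKind : Type where
  | type : LKind
  | pi : LTy → LKind → LKind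

mutual
def liftTy (d : Nat) : LTy → LTy
  | .const a => .const a
  | .pi A B => .pi (liftTy d A) (liftTy (d+1) B)
  | .app A M => .app (liftTy d A) (liftObj d M)
def liftObj (d : Nat) : LObj → LObj
  | .const c => .const c
  | .var k => if k < d then .var k else .var (k+1)
  | .mvar X => .mvar X
  | .app M N => .app (liftObj d M) (liftObj d N)
  | .lam A M => .lam (liftTy d A) (liftObj (d+1) M)
end

def liftKind (d : Nat) : LKind → LKind
  | .type => .type
  | .pi A K => .pi (liftTy d A) (liftKind (d+1) K)

/- Capture-avoiding substitution of an object for de Bruijn variable d. -/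
mutual
def substTy (d : Nat) (s : LObj) : LTy → LTy
  | .const a => .const a
  | .pi A B => .pi (substTy d s A) (substTy (d+1) (liftObj 0 s) B)
  | .app A M => .app (substTy d s A) (substObj d s M)
def substObj (d : Nat) (s : LObj) : LObj → LObj
  | .const c => .const c
  | .var k => if k = d then s else if d < k then .var (k-1) else .var k
  | .mvar X => .mvar X
  | .app M N => .app (substObj d s M) (substObj d s N)
  | .lam A M => .lam (substTy d s A) (substObj (d+1) (liftObj 0 s) M)
end

def substKind (d : Nat) (s : LObj) : LKind → LKind
  | .type => .type
  | .pi A K => .pi (substTy d s A) (substKind (d+1) (liftObj 0 s) K)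

/- Context lookup with the appropriate lifting. -/
inductive Lk : List LTy → Nat → LTy → Prop where
  | zero : Lk (A :: Γ) 0 (liftTy 0 A)
  | succ : Lk Γ k A → Lk (B :: Γ) (k+1) (liftTy 0 A)

/- LF typing judgments, relative to a signature (ts for kinds of type constants,
   os for types of object constants) and a mvar-variable context Δ. -/
mutual
inductive WfKind (ts : Nat → LKind) (os : Nat → LTy) (Δ : Nat → LTy) :
    List LTy → LKind → Prop where
  | type : WfKind ts os Δ Γ .type
  | pi : HasKind ts os Δ Γ A .type → WfKind ts os Δ (A :: Γ) K →
      WfKind ts os Δ Γ (.pi A K)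
inductive HasKind (ts : Nat → LKind) (os : Nat → LTy) (Δ : Nat → LTy) :
    List LTy → LTy → LKind → Prop where
  | const : HasKind ts os Δ Γ (.const a) (ts a)
  | pi : HasKind ts os Δ Γ A .type → HasKind ts os Δ (A :: Γ) B .type →
      HasKind ts os Δ Γ (.pi A B) .type
  | app : HasKind ts os Δ Γ A (.pi B K) → HasTy ts os Δ Γ M B →
      HasKind ts os Δ Γ (.app A M) (substKind 0 M K)
inductive HasTy (ts : Nat → LKind) (os : Nat → LTy) (Δ : Nat → LTy) :
    List LTy → LObj → LTy → Prop where
  | const : HasTy ts os Δ Γ (.const c) (os c)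
  | var : Lk Γ k A → HasTy ts os Δ Γ (.var k) A
  | mvar : HasTy ts os Δ Γ (.mvar X) (Δ X)
  | lam : HasKind ts os Δ Γ A .type → HasTy ts os Δ (A :: Γ) M B →
      HasTy ts os Δ Γ (.lam A M) (.pi A B)
  | app : HasTy ts os Δ Γ M (.pi A B) → HasTy ts os Δ Γ N A →
      HasTy ts os Δ Γ (.app M N) (substTy 0 N B)
end
/- Simple types with the two atomic types lf-obj and lf-type. -/
inductive STy : Type where
  | lfObj : STy
  | lfType : STy
  | arr : STy → STy → STy

/- The flattening map φ on LF types (base types go to lf-obj). -/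
def phiTy : LTy → STy
  | .const _ => .lfObj
  | .app _ _ => .lfObj
  | .pi A B => .arr (phiTy A) (phiTy B)

/- The flattening map φ on LF kinds. -/
def phiKind : LKind → STy
  | .type => .lfType
  | .pi A K => .arr (phiTy A) (phiKind K)

/- Simply typed λ-terms (hohh terms), with mvar-variables. -/
inductive Tm : Type where
  | const : Nat → Tm
  | var : Nat → Tm
  | mvar : Nat → Tm
  | app : Tm → Tm → Tm
  | lam : STy → Tm → Tm

def liftTm (d : Nat) : Tm → Tm
  | .const c => .const c
  | .var k => if k < d then .var k else .var (k+1)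
  | .mvar X => .mvar X
  | .app m n => .app (liftTm d m) (liftTm d n)
  | .lam τ m => .lam τ (liftTm (d+1) m)

def substTm (d : Nat) (s : Tm) : Tm → Tm
  | .const c => .const c
  | .var k => if k = d then s else if d < k then .var (k-1) else .var k
  | .mvar X => .mvar X
  | .app m n => .app (substTm d s m) (substTm d s n)
  | .lam τ m => .lam τ (substTm (d+1) (liftTm 0 s) m)

/- The lossy encoding ⟨·⟩ of LF objects as simply typed terms. -/
def enc : LObj → Tm
  | .const c => .const c
  | .var k => .var k
  | .mvar X => .mvar X
  | .app M N => .app (enc M) (enc N)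
  | .lam A M => .lam (phiTy A) (enc M)

/- STLC typing, relative to a signature cs and mvar-variable typing ms. -/
inductive SHas (cs : Nat → STy) (ms : Nat → STy) : List STy → Tm → STy → Prop where
  | const : SHas cs ms Γ (.const c) (cs c)
  | var : Γ[k]? = some τ → SHas cs ms Γ (.var k) τ
  | mvar : SHas cs ms Γ (.mvar X) (ms X)
  | app : SHas cs ms Γ m (.arr τ σ) → SHas cs ms Γ n τ → SHas cs ms Γ (.app m n) σ
  | lam : SHas cs ms (τ :: Γ) m σ → SHas cs ms Γ (.lam τ m) (.arr τ σ)

theorem phi_liftTy : ∀ (d : Nat) (A : LTy), phiTy (liftTy d A) = phiTy A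
  | _, .const _ => rfl
  | _, .app _ _ => rfl
  | d, .pi A B => by simp [liftTy, phiTy, phi_liftTy d A, phi_liftTy (d+1) B]

theorem phi_substTy : ∀ (d : Nat) (s : LObj) (A : LTy),
    phiTy (substTy d s A) = phiTy A
  | _, _, .const _ => rfl
  | _, _, .app _ _ => rfl
  | d, s, .pi A B => by
      simp [substTy, phiTy, phi_substTy d s A, phi_substTy (d+1) (liftObj 0 s) B]

theorem lk_get {Γ : List LTy} {k : Nat} {A : LTy} (h : Lk Γ k A) :
    (Γ.map phiTy)[k]? = some (phiTy A) := by
  induction h with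
  | zero => simp [phi_liftTy]
  | succ _ ih => simpa [phi_liftTy] using ih

/-- If Γ ⊢_Σ M : A in LF, then the encoding ⟨M⟩ is well-typed in STLC with type
    φ(A), in the signature/context obtained by flattening all declared types
    via φ. -/
theorem encoding_preserves_typing
    (ts : Nat → LKind) (os Δ : Nat → LTy) (Γ : List LTy) (M : LObj) (A : LTy)
    (h : HasTy ts os Δ Γ M A) :
    SHas (fun c => phiTy (os c)) (fun X => phiTy (Δ X))
      (Γ.map phiTy) (enc M) (phiTy A) := by
  refine HasTy.rec (ts := ts) (os := os) (Δ := Δ)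
    (motive_1 := fun _ _ _ => True) (motive_2 := fun _ _ _ _ => True)
    (motive_3 := fun Γ M A _ =>
      SHas (fun c => phiTy (os c)) (fun X => phiTy (Δ X))
        (Γ.map phiTy) (enc M) (phiTy A))
    trivial (fun _ _ _ _ => trivial) trivial (fun _ _ _ _ => trivial)
    (fun _ _ _ _ => trivial)
    SHas.const
    (fun hk => SHas.var (lk_get hk))
    SHas.mvar
    (fun _ _ _ ih => SHas.lam ih)
    (fun _ _ ih1 ih2 => by simpa [enc, phi_substTy] using SHas.app ih1 ih2)
    h
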